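/- Let ψ be a nontrivial multiplicative character on F_q and ψ' its lift to F_{q^r} defined by ψ'(x) = ψ(N(x)) where N is the norm from F_{q^r} to F_q. Then G(ψ') = (-1)^{r-1} G(ψ)^r. -/

import Mathlib

open Polynomial Finset

namespace DHaux

open scoped Classical

variable {F : Type*} [Field F] [Fintype F]

noncomputable def polyOf (n : ℕ) (c : Fin n → F) : F[X] :=
  X ^ n + ∑ i : Fin n, C (c i) * X ^ (i : ℕ)

lemma degree_sum_lt (n : ℕ) (c : Fin n → F) :
    (∑ i : Fin n, C (c i) * X ^ (i : ℕ)).degree < (n : WithBot ℕ) := by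
  apply lt_of_le_of_lt (Polynomial.degree_sum_le _ _)
  rw [Finset.sup_lt_iff (by exact_mod_cast WithBot.bot_lt_coe n)]
  intro i _
  exact lt_of_le_of_lt (degree_C_mul_X_pow_le _ _) (by exact_mod_cast i.2)

lemma polyOf_monic (n : ℕ) (c : Fin n → F) : (polyOf n c).Monic :=
  monic_X_pow_add (degree_sum_lt n c)

lemma polyOf_degree (n : ℕ) (c : Fin n → F) : (polyOf n c).degree = n := by
  rw [polyOf, degree_add_eq_left_of_degree_lt (by rw [degree_X_pow]; exact degree_sum_lt n c),
    degree_X_pow]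

lemma polyOf_natDegree (n : ℕ) (c : Fin n → F) : (polyOf n c).natDegree = n :=
  natDegree_eq_of_degree_eq_some (polyOf_degree n c)

lemma polyOf_coeff (n : ℕ) (c : Fin n → F) (k : ℕ) :
    (polyOf n c).coeff k = if h : k < n then c ⟨k, h⟩ else if k = n then 1 else 0 := by
  rw [polyOf, coeff_add, coeff_X_pow, finset_sum_coeff]
  simp only [coeff_C_mul, coeff_X_pow]
  by_cases h : k < n
  · rw [dif_pos h, if_neg (by omega), zero_add]
    rw [Finset.sum_eq_single (⟨k, h⟩ : Fin n)]
    · simp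
    · intro i _ hi
      have hki : ¬ (k = (i : ℕ)) := fun hk => hi (by simp [Fin.ext_iff, ← hk])
      simp [hki]
    · simp
  · rw [dif_neg h]
    have hz : ∀ i : Fin n, ¬ (k = (i : ℕ)) := fun i hk => h (hk ▸ i.2)
    simp only [hz, if_false, mul_zero, Finset.sum_const_zero, add_zero]

lemma polyOf_injective (n : ℕ) : Function.Injective (polyOf (F := F) n) := by
  intro c c' h
  funext i
  have := congrArg (fun f => Polynomial.coeff f (i : ℕ)) h
  simpa [polyOf_coeff, i.2] using this

noncomputable def MD (n : ℕ) : Finset F[X] := Finset.univ.image (polyOf n)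

lemma mem_MD {n : ℕ} {f : F[X]} : f ∈ MD n ↔ f.Monic ∧ f.natDegree = n := by
  constructor
  · intro hf
    rcases Finset.mem_image.1 hf with ⟨c, _, rfl⟩
    exact ⟨polyOf_monic n c, polyOf_natDegree n c⟩
  · rintro ⟨hm, rfl⟩
    refine Finset.mem_image.2 ⟨fun i => f.coeff (i : ℕ), Finset.mem_univ _, ?_⟩
    ext k
    rw [polyOf_coeff]
    split_ifs with h h2
    · rfl
    · exact (h2 ▸ hm.coeff_natDegree).symm
    · exact (coeff_eq_zero_of_natDegree_lt (by omega)).symm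

lemma sum_MD {n : ℕ} (g : F[X] → ℂ) :
    ∑ f ∈ MD n, g f = ∑ c : Fin n → F, g (polyOf n c) :=
  Finset.sum_image (fun _ _ _ _ h => polyOf_injective n h)

variable (χ : MulChar F ℂ) (Φ : AddChar F ℂ)

noncomputable def lam (f : F[X]) : ℂ :=
  Φ (-f.nextCoeff) * χ ((-1) ^ f.natDegree * f.coeff 0)

lemma lam_one : lam χ Φ 1 = 1 := by
  simp [lam, Polynomial.nextCoeff]

lemma lam_mul {f g : F[X]} (hf : f.Monic) (hg : g.Monic) :
    lam χ Φ (f * g) = lam χ Φ f * lam χ Φ g := by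
  unfold lam
  rw [hf.nextCoeff_mul hg, natDegree_mul hf.ne_zero hg.ne_zero, mul_coeff_zero]
  rw [neg_add, Φ.map_add_eq_mul]
  have h : ((-1 : F)) ^ (f.natDegree + g.natDegree) * (f.coeff 0 * g.coeff 0)
      = ((-1) ^ f.natDegree * f.coeff 0) * ((-1) ^ g.natDegree * g.coeff 0) := by
    ring
  rw [h, map_mul]
  ring

lemma lam_pow {f : F[X]} (hf : f.Monic) (j : ℕ) :
    lam χ Φ (f ^ j) = lam χ Φ f ^ j := by
  induction j with
  | zero => simpa using lam_one χ Φ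
  | succ j ih => rw [pow_succ, lam_mul χ Φ (hf.pow j) hf, ih, pow_succ]

noncomputable def GS : ℂ := ∑ x : F, χ x * Φ x

noncomputable def aS (n : ℕ) : ℂ := ∑ f ∈ MD n, lam χ Φ f

lemma aS_zero : aS χ Φ 0 = 1 := by
  rw [aS, sum_MD]
  have h1 : ∀ c : Fin 0 → F, polyOf 0 c = 1 := fun c => by simp [polyOf]
  simp [h1, lam_one]

lemma aS_one : aS χ Φ 1 = GS χ Φ := by
  rw [aS, sum_MD, GS]
  have h : ∀ c : Fin 1 → F, lam χ Φ (polyOf 1 c) = Φ (-(c 0)) * χ (-(c 0)) := by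
    intro c
    have hd : (polyOf 1 c).natDegree = 1 := polyOf_natDegree 1 c
    have hc0 : (polyOf 1 c).coeff 0 = c 0 := by
      rw [polyOf_coeff]; norm_num
    have hn : (polyOf 1 c).nextCoeff = c 0 := by
      rw [Polynomial.nextCoeff, hd]; simpa using hc0
    rw [lam, hn, hd, hc0, pow_one, neg_one_mul]
  refine Fintype.sum_equiv ((Equiv.funUnique (Fin 1) F).trans (Equiv.neg F)) _ _ ?_
  intro c
  simp only [Equiv.trans_apply, Equiv.funUnique_apply, Equiv.neg_apply, h c]
  exact mul_comm _ _

lemma aS_ge_two (hχ : ∑ x : F, χ x = 0) {n : ℕ} (hn : 2 ≤ n) : aS χ Φ n = 0 := by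
  rw [aS, sum_MD]
  have h0 : (0 : ℕ) < n := by omega
  have hL : n - 1 < n := by omega
  set z : Fin n := ⟨0, h0⟩ with hz
  set L : Fin n := ⟨n - 1, hL⟩ with hLdef
  have hLz : L ≠ z := by simp [hz, hLdef, Fin.ext_iff]; omega
  have h : ∀ c : Fin n → F,
      lam χ Φ (polyOf n c) = Φ (-(c L)) * (χ ((-1) ^ n) * χ (c z)) := by
    intro c
    have hd : (polyOf n c).natDegree = n := polyOf_natDegree n c
    have hc0 : (polyOf n c).coeff 0 = c z := by
      rw [polyOf_coeff]; rw [dif_pos h0]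
    have hn1 : (polyOf n c).nextCoeff = c L := by
      rw [Polynomial.nextCoeff, hd, if_neg (by omega), polyOf_coeff, dif_pos hL]
    rw [lam, hn1, hd, hc0, map_mul]
  rw [Finset.sum_congr rfl (fun c _ => h c)]
  rw [← Equiv.sum_comp (Equiv.funSplitAt z F).symm]
  rw [Fintype.sum_prod_type]
  have key : ∀ x : F, ∀ g : {j // j ≠ z} → F,
      (Equiv.funSplitAt z F).symm (x, g) L = g ⟨L, hLz⟩ ∧
      (Equiv.funSplitAt z F).symm (x, g) z = x := by
    intro x g
    constructor
    · simp [Equiv.funSplitAt, Equiv.piSplitAt, hLz]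
    · simp [Equiv.funSplitAt, Equiv.piSplitAt]
  have : ∀ x : F, ∑ g : {j // j ≠ z} → F,
      Φ (-((Equiv.funSplitAt z F).symm (x, g) L)) *
        (χ ((-1) ^ n) * χ ((Equiv.funSplitAt z F).symm (x, g) z))
      = (∑ g : {j // j ≠ z} → F, Φ (-(g ⟨L, hLz⟩))) * (χ ((-1) ^ n) * χ x) := by
    intro x
    rw [Finset.sum_mul]
    refine Finset.sum_congr rfl fun g _ => ?_
    rw [(key x g).1, (key x g).2]
  rw [Finset.sum_congr rfl (fun x _ => this x)]
  have h2 : ∑ x : F, (∑ g : {j // j ≠ z} → F, Φ (-(g ⟨L, hLz⟩))) * (χ ((-1) ^ n) * χ x)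
      = ((∑ g : {j // j ≠ z} → F, Φ (-(g ⟨L, hLz⟩))) * χ ((-1) ^ n)) * ∑ x : F, χ x := by
    rw [Finset.mul_sum]
    exact Finset.sum_congr rfl fun x _ => by ring
  rw [h2, hχ, mul_zero]


noncomputable def Irr (d : ℕ) : Finset F[X] := (MD d).filter Irreducible

lemma mem_Irr {d : ℕ} {f : F[X]} :
    f ∈ Irr (F := F) d ↔ f.Monic ∧ f.natDegree = d ∧ Irreducible f := by
  simp only [Irr, Finset.mem_filter, mem_MD]
  tauto

noncomputable def bS (k : ℕ) : ℂ :=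
  ∑ d ∈ k.divisors, ∑ P ∈ Irr (F := F) d, (d : ℂ) * lam χ Φ P ^ (k / d)

noncomputable def wS (k : ℕ) (f : F[X]) : ℂ :=
  ∑ d ∈ k.divisors, ∑ P ∈ Irr (F := F) d, (if P ^ (k / d) ∣ f then (d : ℂ) else 0)

lemma bS_mul_aS {n k : ℕ} (hkn : k ≤ n) :
    bS χ Φ k * aS χ Φ (n - k) = ∑ f ∈ MD n, lam χ Φ f * wS k f := by
  rw [bS, Finset.sum_mul]
  have step : ∀ d ∈ k.divisors,
      (∑ P ∈ Irr (F := F) d, (d : ℂ) * lam χ Φ P ^ (k / d)) * aS χ Φ (n - k)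
      = ∑ f ∈ MD n, lam χ Φ f *
          ∑ P ∈ Irr (F := F) d, (if P ^ (k / d) ∣ f then (d : ℂ) else 0) := by
    intro d hd
    rw [Finset.sum_mul]
    have hdvd : d ∣ k := (Nat.mem_divisors.1 hd).1
    have hjd : (k / d) * d = k := Nat.div_mul_cancel hdvd
    have inner : ∀ P ∈ Irr (F := F) d,
        ((d : ℂ) * lam χ Φ P ^ (k / d)) * aS χ Φ (n - k)
        = ∑ f ∈ MD n, (if P ^ (k / d) ∣ f then (d : ℂ) * lam χ Φ f else 0) := by
      intro P hP
      obtain ⟨hPm, hPd, hPirr⟩ := mem_Irr.1 hP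
      set j := k / d with hj
      have hPj : (P ^ j).Monic := hPm.pow j
      have hPjdeg : (P ^ j).natDegree = k := by
        rw [natDegree_pow, hPd]; omega
      have key : ∑ g ∈ MD (n - k), lam χ Φ (P ^ j * g)
          = ∑ f ∈ (MD n).filter (fun f => P ^ j ∣ f), lam χ Φ f := by
        refine Finset.sum_nbij' (i := fun g => P ^ j * g) (j := fun f => f /ₘ P ^ j)
          ?_ ?_ ?_ ?_ ?_
        · intro g hg
          obtain ⟨hgm, hgd⟩ := mem_MD.1 hg
          refine Finset.mem_filter.2 ⟨mem_MD.2 ⟨hPj.mul hgm, ?_⟩, dvd_mul_right _ _⟩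
          rw [natDegree_mul hPj.ne_zero hgm.ne_zero, hPjdeg, hgd]; omega
        · intro f hf
          obtain ⟨hfmem, hfdvd⟩ := Finset.mem_filter.1 hf
          obtain ⟨hfm, hfdeg⟩ := mem_MD.1 hfmem
          have heq : P ^ j * (f /ₘ P ^ j) = f := by
            conv_rhs => rw [← Polynomial.modByMonic_add_div f (P ^ j)]
            rw [(Polynomial.modByMonic_eq_zero_iff_dvd hPj).2 hfdvd, zero_add]
          have hgm : (f /ₘ P ^ j).Monic := hPj.of_mul_monic_left (heq.symm ▸ hfm)
          refine mem_MD.2 ⟨hgm, ?_⟩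
          show (f /ₘ P ^ j).natDegree = n - k
          have := congrArg natDegree heq
          rw [natDegree_mul hPj.ne_zero hgm.ne_zero, hPjdeg, hfdeg] at this
          omega
        · intro g _
          exact Polynomial.mul_divByMonic_cancel_left g hPj
        · intro f hf
          obtain ⟨_, hfdvd⟩ := Finset.mem_filter.1 hf
          conv_rhs => rw [← Polynomial.modByMonic_add_div f (P ^ j)]
          rw [(Polynomial.modByMonic_eq_zero_iff_dvd hPj).2 hfdvd, zero_add]
        · intro g hg
          rw [lam_mul χ Φ hPj (mem_MD.1 hg).1, lam_pow χ Φ hPm]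
      rw [aS, Finset.mul_sum]
      calc ∑ g ∈ MD (n - k), (d : ℂ) * lam χ Φ P ^ j * lam χ Φ g
          = (d : ℂ) * ∑ g ∈ MD (n - k), lam χ Φ (P ^ j * g) := by
            rw [Finset.mul_sum]
            refine Finset.sum_congr rfl fun g hg => ?_
            rw [lam_mul χ Φ hPj (mem_MD.1 hg).1, lam_pow χ Φ hPm]
            ring
        _ = (d : ℂ) * ∑ f ∈ (MD n).filter (fun f => P ^ j ∣ f), lam χ Φ f := by rw [key]
        _ = ∑ f ∈ MD n, (if P ^ j ∣ f then (d : ℂ) * lam χ Φ f else 0) := by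
            rw [Finset.mul_sum, Finset.sum_filter]
    rw [Finset.sum_congr rfl inner, Finset.sum_comm]
    refine Finset.sum_congr rfl fun f _ => ?_
    rw [Finset.mul_sum]
    exact Finset.sum_congr rfl fun P _ => by split_ifs <;> ring
  rw [Finset.sum_congr rfl step, Finset.sum_comm]
  refine Finset.sum_congr rfl fun f _ => ?_
  rw [wS, Finset.mul_sum]

lemma divisor_reindex (n : ℕ) (h : ℕ → ℕ → ℂ) :
    ∑ k ∈ Finset.Icc 1 n, ∑ d ∈ k.divisors, h d (k / d)
      = ∑ d ∈ Finset.Icc 1 n, ∑ j ∈ Finset.Icc 1 (n / d), h d j := by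
  rw [Finset.sum_sigma', Finset.sum_sigma']
  refine Finset.sum_nbij' (i := fun x => ⟨x.2, x.1 / x.2⟩) (j := fun x => ⟨x.1 * x.2, x.1⟩)
    ?_ ?_ ?_ ?_ ?_
  · rintro ⟨k, d⟩ hx
    simp only [Finset.mem_sigma, Finset.mem_Icc, Nat.mem_divisors] at hx ⊢
    obtain ⟨⟨hk1, hkn⟩, hdk, -⟩ := hx
    have hd0 : 0 < d := Nat.pos_of_dvd_of_pos hdk hk1
    have hdk' : d ≤ k := Nat.le_of_dvd hk1 hdk
    refine ⟨⟨hd0, le_trans hdk' hkn⟩, ?_, Nat.div_le_div_right hkn⟩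
    exact Nat.one_le_div_iff hd0 |>.2 hdk'
  · rintro ⟨d, j⟩ hx
    simp only [Finset.mem_sigma, Finset.mem_Icc, Nat.mem_divisors] at hx ⊢
    obtain ⟨⟨hd1, hdn⟩, hj1, hjn⟩ := hx
    have hd0 : 0 < d := hd1
    have hmul : d * j ≤ n := by
      have hh := (Nat.le_div_iff_mul_le hd0).1 hjn
      rw [mul_comm]; exact hh
    have h1 : 1 ≤ d * j := Nat.one_le_iff_ne_zero.2 (Nat.mul_ne_zero (by omega) (by omega))
    exact ⟨⟨h1, hmul⟩, dvd_mul_right d j, by omega⟩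
  · rintro ⟨k, d⟩ hx
    simp only [Finset.mem_sigma, Finset.mem_Icc, Nat.mem_divisors] at hx
    obtain ⟨-, hdk, hk0⟩ := hx
    have : d * (k / d) = k := Nat.mul_div_cancel' hdk
    simp [this]
  · rintro ⟨d, j⟩ hx
    simp only [Finset.mem_sigma, Finset.mem_Icc] at hx
    have hd0 : 0 < d := hx.1.1
    have : d * j / d = j := Nat.mul_div_cancel_left j hd0
    simp [this]
  · rintro ⟨k, d⟩ hx
    rfl

lemma count_lemma {n d : ℕ} {P f : F[X]} (hP : P ∈ Irr (F := F) d) (hf : f ∈ MD n) :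
    ∑ j ∈ Finset.Icc 1 (n / d), (if P ^ j ∣ f then (d : ℂ) else 0)
      = ((Multiset.count P (UniqueFactorizationMonoid.normalizedFactors f) * d : ℕ) : ℂ) := by
  obtain ⟨hPm, hPd, hPirr⟩ := mem_Irr.1 hP
  obtain ⟨hfm, hfd⟩ := mem_MD.1 hf
  have hd0 : 0 < d := hPd ▸ hPirr.natDegree_pos
  set c := Multiset.count P (UniqueFactorizationMonoid.normalizedFactors f) with hc
  have hem : emultiplicity P f = (c : ℕ∞) := by
    rw [UniqueFactorizationMonoid.emultiplicity_eq_count_normalizedFactors hPirr hfm.ne_zero,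
      hPm.normalize_eq_self]
  have hdvd : ∀ j : ℕ, P ^ j ∣ f ↔ j ≤ c := by
    intro j
    rw [pow_dvd_iff_le_emultiplicity, hem]
    exact_mod_cast Nat.cast_le
  have hcn : c ≤ n / d := by
    have h1 : P ^ c ∣ f := (hdvd c).2 le_rfl
    have h2 : (P ^ c).natDegree ≤ n := hfd ▸ natDegree_le_of_dvd h1 hfm.ne_zero
    rw [natDegree_pow, hPd] at h2
    exact (Nat.le_div_iff_mul_le hd0).2 h2
  have hre : ∀ j ∈ Finset.Icc 1 (n / d),
      (if P ^ j ∣ f then (d : ℂ) else 0) = (if j ≤ c then (d : ℂ) else 0) := by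
    intro j _
    by_cases h : j ≤ c
    · rw [if_pos ((hdvd j).2 h), if_pos h]
    · rw [if_neg (fun hh => h ((hdvd j).1 hh)), if_neg h]
  rw [Finset.sum_congr rfl hre, ← Finset.sum_filter]
  have hfil : (Finset.Icc 1 (n / d)).filter (fun j => j ≤ c) = Finset.Icc 1 c := by
    ext x
    simp only [Finset.mem_filter, Finset.mem_Icc]
    omega
  rw [hfil, Finset.sum_const, Nat.card_Icc]
  push_cast
  ring

lemma irr_natDegree_pos {P : F[X]} (h : Irreducible P) : 0 < P.natDegree :=
  h.natDegree_pos

lemma sum_wS {n : ℕ} {f : F[X]} (hf : f ∈ MD n) :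
    ∑ k ∈ Finset.Icc 1 n, wS k f = (n : ℂ) := by
  unfold wS
  rw [divisor_reindex n
    (fun d j => ∑ P ∈ Irr (F := F) d, (if P ^ j ∣ f then (d : ℂ) else 0))]
  have swap : ∀ d ∈ Finset.Icc 1 n,
      ∑ j ∈ Finset.Icc 1 (n / d), ∑ P ∈ Irr (F := F) d, (if P ^ j ∣ f then (d : ℂ) else 0)
      = ∑ P ∈ Irr (F := F) d,
          ((Multiset.count P (UniqueFactorizationMonoid.normalizedFactors f) * d : ℕ) : ℂ) := by
    intro d _
    rw [Finset.sum_comm]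
    exact Finset.sum_congr rfl fun P hP => count_lemma hP hf
  rw [Finset.sum_congr rfl swap]
  obtain ⟨hfm, hfd⟩ := mem_MD.1 hf
  set M := UniqueFactorizationMonoid.normalizedFactors f with hM
  have key : ∑ d ∈ Finset.Icc 1 n, ∑ P ∈ Irr (F := F) d,
      Multiset.count P M * d = n := by
    have hmemirr : ∀ P ∈ M, Irreducible P :=
      fun P hP => UniqueFactorizationMonoid.irreducible_of_normalized_factor P hP
    have hmemmonic : ∀ P ∈ M, P.Monic := by
      intro P hP
      have h1 := UniqueFactorizationMonoid.normalize_normalized_factor P hP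
      have h2 : P ≠ 0 := (hmemirr P hP).ne_zero
      rw [← h1]
      exact Polynomial.monic_normalize h2
    have hsub : M.toFinset ⊆ (Finset.Icc 1 n).biUnion (fun d => Irr (F := F) d) := by
      intro P hP
      rw [Multiset.mem_toFinset] at hP
      have hirr := hmemirr P hP
      have hmon := hmemmonic P hP
      have hdvd : P ∣ f := UniqueFactorizationMonoid.dvd_of_mem_normalizedFactors hP
      have hle : P.natDegree ≤ n := hfd ▸ natDegree_le_of_dvd hdvd hfm.ne_zero
      refine Finset.mem_biUnion.2 ⟨P.natDegree, ?_, mem_Irr.2 ⟨hmon, rfl, hirr⟩⟩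
      rw [Finset.mem_Icc]
      exact ⟨hirr.natDegree_pos, hle⟩
    have hdisj : ∀ d1 ∈ Finset.Icc 1 n, ∀ d2 ∈ Finset.Icc 1 n, d1 ≠ d2 →
        Disjoint (Irr (F := F) d1) (Irr (F := F) d2) := by
      intro d1 _ d2 _ hne
      rw [Finset.disjoint_left]
      intro P h1 h2
      exact hne ((mem_Irr.1 h1).2.1 ▸ (mem_Irr.1 h2).2.1 ▸ rfl)
    have hdeq : ∀ d ∈ Finset.Icc 1 n, ∀ P ∈ Irr (F := F) d,
        Multiset.count P M * d = Multiset.count P M * P.natDegree := by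
      intro d _ P hP
      rw [(mem_Irr.1 hP).2.1]
    calc ∑ d ∈ Finset.Icc 1 n, ∑ P ∈ Irr (F := F) d, Multiset.count P M * d
        = ∑ d ∈ Finset.Icc 1 n, ∑ P ∈ Irr (F := F) d,
            Multiset.count P M * P.natDegree :=
          Finset.sum_congr rfl fun d hd => Finset.sum_congr rfl (hdeq d hd)
      _ = ∑ P ∈ (Finset.Icc 1 n).biUnion (fun d => Irr (F := F) d),
            Multiset.count P M * P.natDegree := (Finset.sum_biUnion hdisj).symm
      _ = ∑ P ∈ M.toFinset, Multiset.count P M * P.natDegree := by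
          refine (Finset.sum_subset hsub ?_).symm
          intro P _ hPnot
          rw [Multiset.count_eq_zero.2 (fun h => hPnot (Multiset.mem_toFinset.2 h)), zero_mul]
      _ = (M.map Polynomial.natDegree).sum := by
          rw [Finset.sum_multiset_map_count]
          exact Finset.sum_congr rfl fun P _ => by simp
      _ = M.prod.natDegree := by
          refine (Polynomial.natDegree_multiset_prod M ?_).symm
          intro h0
          exact (hmemirr 0 h0).ne_zero rfl
      _ = f.natDegree := by
          congr 1
          refine Polynomial.eq_of_monic_of_associated ?_ hfm
            (UniqueFactorizationMonoid.prod_normalizedFactors hfm.ne_zero)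
          have hmon : (M.map id).prod.Monic :=
            Polynomial.monic_multiset_prod_of_monic M id (fun P hP => hmemmonic P hP)
          rwa [Multiset.map_id] at hmon
      _ = n := hfd
  calc ∑ d ∈ Finset.Icc 1 n, ∑ P ∈ Irr (F := F) d,
      ((Multiset.count P M * d : ℕ) : ℂ)
      = ((∑ d ∈ Finset.Icc 1 n, ∑ P ∈ Irr (F := F) d,
          (Multiset.count P M * d) : ℕ) : ℂ) := by push_cast; rfl
    _ = (n : ℂ) := by rw [key]

lemma recurrence {n : ℕ} :
    (n : ℂ) * aS χ Φ n = ∑ k ∈ Finset.Icc 1 n, bS χ Φ k * aS χ Φ (n - k) := by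
  have h1 : ∀ k ∈ Finset.Icc 1 n, bS χ Φ k * aS χ Φ (n - k)
      = ∑ f ∈ MD n, lam χ Φ f * wS k f := by
    intro k hk
    exact bS_mul_aS χ Φ (Finset.mem_Icc.1 hk).2
  rw [Finset.sum_congr rfl h1, Finset.sum_comm, aS, Finset.mul_sum]
  refine Finset.sum_congr rfl fun f hf => ?_
  rw [← Finset.mul_sum, sum_wS hf]
  ring

lemma bS_one_eq (hχ : ∑ x : F, χ x = 0) : bS χ Φ 1 = GS χ Φ := by
  have h := recurrence (n := 1) χ Φ
  rw [aS_one χ Φ] at h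
  simp only [Finset.Icc_self, Finset.sum_singleton, Nat.sub_self, aS_zero χ Φ] at h
  rw [Nat.cast_one, one_mul] at h
  rw [mul_one] at h
  exact h.symm

lemma bS_succ (hχ : ∑ x : F, χ x = 0) {n : ℕ} (hn : 1 ≤ n) :
    bS χ Φ (n + 1) = -(GS χ Φ * bS χ Φ n) := by
  obtain ⟨m, rfl⟩ : ∃ m, n = m + 1 := ⟨n - 1, by omega⟩
  have h := recurrence (n := m + 2) χ Φ
  rw [aS_ge_two χ Φ hχ (by omega), mul_zero] at h
  rw [Finset.sum_Icc_succ_top (by omega : 1 ≤ m + 2) ] at h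
  rw [Finset.sum_Icc_succ_top (by omega : 1 ≤ m + 1) ] at h
  have hz : ∀ k ∈ Finset.Icc 1 m, bS χ Φ k * aS χ Φ (m + 2 - k) = 0 := by
    intro k hk
    rw [aS_ge_two χ Φ hχ (by rw [Finset.mem_Icc] at hk; omega), mul_zero]
  rw [Finset.sum_congr rfl hz, Finset.sum_const_zero, zero_add] at h
  have h2 : m + 2 - (m + 1) = 1 := by omega
  have h3 : m + 2 - (m + 2) = 0 := by omega
  rw [h2, h3, aS_one χ Φ, aS_zero χ Φ, mul_one] at h
  linear_combination -h

lemma bS_eq (hχ : ∑ x : F, χ x = 0) {n : ℕ} (hn : 1 ≤ n) :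
    bS (F := F) χ Φ n = (-1) ^ (n - 1) * GS χ Φ ^ n := by
  induction n, hn using Nat.le_induction with
  | base => simpa using bS_one_eq χ Φ hχ
  | succ n hn ih =>
      rw [bS_succ χ Φ hχ hn, ih]
      obtain ⟨m, rfl⟩ : ∃ m, n = m + 1 := ⟨n - 1, by omega⟩
      simp only [Nat.add_sub_cancel]
      ring


section Lift

variable {E : Type*} [Field E] [Fintype E] [Algebra F E]

open IntermediateField in
lemma term_eq (α : E) :
    (minpoly F α ∈ Irr (F := F) ((minpoly F α).natDegree)) ∧
    (minpoly F α).natDegree ∣ Module.finrank F E ∧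
    χ (Algebra.norm F α) * Φ (Algebra.trace F E α)
      = lam χ Φ (minpoly F α) ^ (Module.finrank F E / (minpoly F α).natDegree) := by
  have hint : IsIntegral F α := Algebra.IsIntegral.isIntegral α
  set P := minpoly F α with hPdef
  set d := P.natDegree with hddef
  have hPm : P.Monic := minpoly.monic hint
  have hPirr : Irreducible P := minpoly.irreducible hint
  have h1 : P ∈ Irr (F := F) d := mem_Irr.2 ⟨hPm, rfl, hPirr⟩
  have hd0 : 0 < d := hPirr.natDegree_pos
  set K := F⟮α⟯
  haveI hKE : FiniteDimensional K E := FiniteDimensional.right F K E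
  set pb := IntermediateField.adjoin.powerBasis hint with hpb
  have hgen : pb.gen = IntermediateField.AdjoinSimple.gen F α := rfl
  have hminpb : minpoly F pb.gen = P := by
    rw [hgen, IntermediateField.minpoly_gen F α]
  have hdim : pb.dim = d := by
    rw [← PowerBasis.natDegree_minpoly pb, hminpb]
  have hfinK : Module.finrank F K = d := IntermediateField.adjoin.finrank hint
  set e := Module.finrank K E with hedef
  have hmul : d * e = Module.finrank F E := by
    rw [← hfinK]
    exact Module.finrank_mul_finrank F K E
  have hdvd : d ∣ Module.finrank F E := ⟨e, hmul.symm⟩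
  have he : Module.finrank F E / d = e := by
    rw [← hmul]
    exact Nat.mul_div_cancel_left e hd0
  have halg : algebraMap K E pb.gen = α := by
    rw [hgen]
    exact IntermediateField.AdjoinSimple.algebraMap_gen F α
  have htrgen : Algebra.trace F K pb.gen = -P.nextCoeff := by
    rw [PowerBasis.trace_gen_eq_nextCoeff_minpoly, hminpb]
  have htr : Algebra.trace F E α = e • (-P.nextCoeff) := by
    rw [← Algebra.trace_trace (S := K) (x := α), ← halg, Algebra.trace_algebraMap,
      map_nsmul, htrgen]
  haveI : Algebra.IsAlgebraic F E := Algebra.IsAlgebraic.of_finite F E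
  haveI : Algebra.IsSeparable F E := inferInstance
  have hnmgen : Algebra.norm F pb.gen = (-1) ^ d * P.coeff 0 := by
    rw [Algebra.PowerBasis.norm_gen_eq_coeff_zero_minpoly pb, hminpb, hdim]
  have hnm : Algebra.norm F α = ((-1) ^ d * P.coeff 0) ^ e := by
    rw [← Algebra.norm_norm (R := F) (S := K) (a := α), ← halg, Algebra.norm_algebraMap, map_pow, hnmgen]
  refine ⟨h1, hdvd, ?_⟩
  rw [he, htr, hnm, AddChar.map_nsmul_eq_pow, map_pow, lam, ← hddef, mul_pow]
  ring

lemma fiber_card {P : F[X]} {d : ℕ} (hP : P ∈ Irr (F := F) d)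
    (hdvd : d ∣ Module.finrank F E) :
    (Finset.univ.filter (fun α : E => minpoly F α = P)).card = d := by
  obtain ⟨hPm, hPd, hPirr⟩ := mem_Irr.1 hP
  have hP0 : P ≠ 0 := hPm.ne_zero
  set q := Fintype.card F with hq
  set r := Module.finrank F E with hr
  obtain ⟨e, he⟩ := hdvd
  have hcardE : Fintype.card E = q ^ r := Module.card_eq_pow_finrank
  haveI : Fact (Irreducible P) := ⟨hPirr⟩
  set K := AdjoinRoot P
  set pb := AdjoinRoot.powerBasis hP0 with hpb
  haveI : Module.Finite F K := Module.Finite.of_basis pb.basis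
  haveI : Finite K := Module.finite_of_finite F
  haveI : Fintype K := Fintype.ofFinite K
  have hfinK : Module.finrank F K = d := by
    rw [PowerBasis.finrank pb, AdjoinRoot.powerBasis_dim, hPd]
  have hcardK : Fintype.card K = q ^ d := by rw [Module.card_eq_pow_finrank (K := F), hfinK]
  set root := AdjoinRoot.root P with hroot
  have h1 : root ^ q ^ d = root := by
    rw [← hcardK]
    exact FiniteField.pow_card root
  have h2 : root ^ q ^ r = root := by
    have : (q ^ d) ^ e = q ^ r := by rw [← pow_mul, ← he]
    rw [← this]
    rw [← hcardK]
    exact FiniteField.pow_card_pow e root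
  have hminroot : minpoly F root = P := by
    rw [AdjoinRoot.minpoly_root hP0, hPm.leadingCoeff, inv_one, map_one, mul_one]
  have haev : (Polynomial.aeval root) ((X : F[X]) ^ q ^ r - X) = 0 := by
    rw [map_sub, map_pow, Polynomial.aeval_X, h2, sub_self]
  have hdvdpoly : P ∣ ((X : F[X]) ^ q ^ r - X) := hminroot ▸ minpoly.dvd F root haev
  set Q := P.map (algebraMap F E) with hQ
  have hQ0 : Q ≠ 0 := (Polynomial.map_ne_zero_iff (algebraMap F E).injective).2 hP0
  have hbig0 : ((X : E[X]) ^ Fintype.card E - X) ≠ 0 :=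
    FiniteField.X_pow_card_sub_X_ne_zero E Fintype.one_lt_card
  have hQdvd : Q ∣ ((X : E[X]) ^ Fintype.card E - X) := by
    have := Polynomial.map_dvd (algebraMap F E) hdvdpoly
    rwa [Polynomial.map_sub, Polynomial.map_pow, Polynomial.map_X, ← hcardE] at this
  have hrootsbig : ((X : E[X]) ^ Fintype.card E - X).roots = Finset.univ.val :=
    FiniteField.roots_X_pow_card_sub_X E
  have hbigsplits : Polynomial.Splits ((X : E[X]) ^ Fintype.card E - X) := by
    rw [Polynomial.splits_iff_card_roots, hrootsbig,
      FiniteField.X_pow_card_sub_X_natDegree_eq E Fintype.one_lt_card]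
    exact Finset.card_univ
  have hQsplits : Polynomial.Splits Q :=
    hbigsplits.of_dvd hbig0 hQdvd
  have hQroots : Q.roots.card = d := by
    rw [Polynomial.splits_iff_card_roots.1 hQsplits, hQ, Polynomial.natDegree_map, hPd]
  have hQnodup : Q.roots.Nodup := by
    refine Multiset.nodup_of_le (Polynomial.roots.le_of_dvd hbig0 hQdvd) ?_
    rw [hrootsbig]
    exact Finset.univ.nodup
  have hfib : Finset.univ.filter (fun α : E => minpoly F α = P) = Q.roots.toFinset := by
    ext β
    simp only [Finset.mem_filter, Finset.mem_univ, true_and, Multiset.mem_toFinset]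
    rw [Polynomial.mem_roots']
    constructor
    · intro hmin
      refine ⟨hQ0, ?_⟩
      rw [Polynomial.IsRoot, Polynomial.eval_map, ← Polynomial.aeval_def, ← hmin]
      exact minpoly.aeval F β
    · rintro ⟨-, hroot⟩
      rw [Polynomial.IsRoot, Polynomial.eval_map, ← Polynomial.aeval_def] at hroot
      exact (minpoly.eq_of_irreducible_of_monic hPirr hroot hPm).symm
  rw [hfib, Multiset.toFinset_card_of_nodup hQnodup, hQroots]

lemma gauss_lift :
    ∑ α : E, χ (Algebra.norm F α) * Φ (Algebra.trace F E α)
      = bS χ Φ (Module.finrank F E) := by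
  classical
  set r := Module.finrank F E with hr
  have hdisj : ∀ d1 ∈ r.divisors, ∀ d2 ∈ r.divisors, d1 ≠ d2 →
      Disjoint (Irr (F := F) d1) (Irr (F := F) d2) := by
    intro d1 _ d2 _ hne
    rw [Finset.disjoint_left]
    intro P h1 h2
    exact hne ((mem_Irr.1 h1).2.1 ▸ (mem_Irr.1 h2).2.1 ▸ rfl)
  have hr0 : r ≠ 0 := Module.finrank_pos.ne'
  have hmaps : ∀ α : E, minpoly F α ∈ r.divisors.biUnion (fun d => Irr (F := F) d) := by
    intro α
    obtain ⟨h1, h2, -⟩ := term_eq χ Φ α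
    exact Finset.mem_biUnion.2 ⟨(minpoly F α).natDegree, Nat.mem_divisors.2 ⟨h2, hr0⟩, h1⟩
  rw [← Finset.sum_fiberwise_of_maps_to (g := fun α : E => minpoly F α)
    (fun α _ => hmaps α) (fun α => χ (Algebra.norm F α) * Φ (Algebra.trace F E α))]
  rw [bS]
  have hrhs : ∀ d ∈ r.divisors, (∑ P ∈ Irr (F := F) d, (d : ℂ) * lam χ Φ P ^ (r / d))
      = ∑ P ∈ Irr (F := F) d, ((P.natDegree : ℂ) * lam χ Φ P ^ (r / P.natDegree)) := by
    intro d _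
    exact Finset.sum_congr rfl fun P hP => by rw [(mem_Irr.1 hP).2.1]
  rw [Finset.sum_congr rfl hrhs, ← Finset.sum_biUnion hdisj]
  refine Finset.sum_congr rfl fun P hP => ?_
  obtain ⟨dd, hdd, hPdd⟩ := Finset.mem_biUnion.1 hP
  have hPd : P.natDegree = dd := (mem_Irr.1 hPdd).2.1
  have hval : ∀ α ∈ Finset.univ.filter (fun α : E => minpoly F α = P),
      χ (Algebra.norm F α) * Φ (Algebra.trace F E α)
        = lam χ Φ P ^ (r / P.natDegree) := by
    intro α hα
    have hmin : minpoly F α = P := (Finset.mem_filter.1 hα).2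
    obtain ⟨-, -, h3⟩ := term_eq χ Φ α
    rw [h3, hmin]
  rw [Finset.sum_congr rfl hval, Finset.sum_const,
    fiber_card hPdd ((Nat.mem_divisors.1 hdd).1), hPd]
  simp [nsmul_eq_mul]

theorem davenport_hasse (hχ : χ ≠ 1) :
    ∑ α : E, χ (Algebra.norm F α) * Φ (Algebra.trace F E α)
      = (-1) ^ (Module.finrank F E - 1) * GS χ Φ ^ (Module.finrank F E) := by
  have hχ0 : ∑ x : F, χ x = 0 := MulChar.sum_eq_zero_of_ne_one hχ
  rw [gauss_lift χ Φ, bS_eq χ Φ hχ0 Module.finrank_pos]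

end Lift

end DHaux

/-- The Gauss sum over a finite field of characteristic `p`, with values in `ℂ`. -/
noncomputable def gaussC (p : ℕ) (F : Type*) [Field F] [Fintype F] [Algebra (ZMod p) F]
    (ψ : MulChar F ℂ) : ℂ :=
  ∑ x : F, ψ x *
    Complex.exp (2 * Real.pi * Complex.I * ((Algebra.trace (ZMod p) F x).val : ℂ) / p)

theorem stmt8 (p s r : ℕ) [Fact p.Prime] (hs : 0 < s) (hr : 1 ≤ r)
    (F E : Type*) [Field F] [Fintype F] [Algebra (ZMod p) F]
    [Field E] [Fintype E] [Algebra (ZMod p) E] [Algebra F E]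
    (hF : Fintype.card F = p ^ s) (hE : Fintype.card E = Fintype.card F ^ r)
    (ψ : MulChar F ℂ) (hψ : ψ ≠ 1)
    (ψ' : MulChar E ℂ) (hlift : ∀ x : E, ψ' x = ψ (Algebra.norm F x)) :
    gaussC p E ψ' = (-1) ^ (r - 1) * gaussC p F ψ ^ r := by
  haveI : NeZero p := ⟨(Fact.out : p.Prime).ne_zero⟩
  have hcomp : algebraMap (ZMod p) E = (algebraMap F E).comp (algebraMap (ZMod p) F) :=
    RingHom.ext_zmod _ _
  haveI : IsScalarTower (ZMod p) F E :=
    IsScalarTower.of_algebraMap_eq (fun x => by rw [hcomp]; rfl)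
  set Φ : AddChar F ℂ :=
    (ZMod.stdAddChar (N := p)).compAddMonoidHom
      (Algebra.trace (ZMod p) F).toAddMonoidHom with hΦ
  have hstd : ∀ a : ZMod p,
      ZMod.stdAddChar a = Complex.exp (2 * Real.pi * Complex.I * (a.val : ℂ) / p) := by
    intro a
    have h1 : ((a.val : ℤ) : ZMod p) = a := by
      push_cast
      rw [ZMod.natCast_val, ZMod.cast_id]
    calc ZMod.stdAddChar a = ZMod.stdAddChar ((a.val : ℤ) : ZMod p) := by rw [h1]
      _ = Complex.exp (2 * Real.pi * Complex.I * ((a.val : ℤ) : ℂ) / p) :=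
          ZMod.stdAddChar_coe _
      _ = _ := by push_cast; ring_nf
  have hgF : gaussC p F ψ = DHaux.GS ψ Φ := by
    rw [gaussC, DHaux.GS]
    refine Finset.sum_congr rfl fun x _ => ?_
    congr 1
    rw [hΦ, AddChar.compAddMonoidHom_apply, hstd]
    rfl
  have htr : ∀ α : E,
      Algebra.trace (ZMod p) E α = Algebra.trace (ZMod p) F (Algebra.trace F E α) :=
    fun α => (Algebra.trace_trace α).symm
  have hgE : gaussC p E ψ' = ∑ α : E, ψ (Algebra.norm F α) * Φ (Algebra.trace F E α) := by
    rw [gaussC]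
    refine Finset.sum_congr rfl fun α _ => ?_
    rw [hlift]
    congr 1
    rw [hΦ, AddChar.compAddMonoidHom_apply, hstd, htr α]
    rfl
  have hrank : Module.finrank F E = r := by
    have h := Module.card_eq_pow_finrank (K := F) (V := E)
    have h2 : Fintype.card F ^ r = Fintype.card F ^ Module.finrank F E := by rw [← hE, h]
    exact (Nat.pow_right_injective Fintype.one_lt_card h2).symm
  rw [hgE, hgF, DHaux.davenport_hasse ψ Φ hψ, hrank]
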